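/- The comaximal graph Γ(L) of a finite-dimensional Lie algebra L is a complete graph if and only if every proper nonzero subalgebra of L is one-dimensional. -/

import Mathlib

open Module

/-- The span of a single element is a Lie subalgebra. -/
def lineSubalg (F : Type*) [Field F] (L : Type*) [LieRing L] [LieAlgebra F L]
    (x : L) : LieSubalgebra F L :=
  { Submodule.span F {x} with
    lie_mem' := by
      intro a b ha hb
      replace ha : a ∈ Submodule.span F {x} := ha
      replace hb : b ∈ Submodule.span F {x} := hb
      rw [Submodule.mem_span_singleton] at ha hb
      obtain ⟨c, rfl⟩ := ha
      obtain ⟨d, rfl⟩ := hb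
      show ⁅(c • x : L), d • x⁆ ∈ Submodule.span F {x}
      have hz : ⁅(c • x : L), d • x⁆ = 0 := by simp
      rw [hz]
      exact Submodule.zero_mem _ }

/-- The comaximal graph `Γ(L)` of a finite-dimensional Lie algebra `L` is complete
(every two distinct nontrivial proper subalgebras generate `L`) iff every nonzero
proper subalgebra of `L` is one-dimensional. -/
theorem comaximal_complete_iff_every_proper_one_dimensional
    (F : Type*) [Field F] (L : Type*) [LieRing L] [LieAlgebra F L]
    [FiniteDimensional F L] :
    (∀ A B : LieSubalgebra F L, A ≠ ⊥ → A ≠ ⊤ → B ≠ ⊥ → B ≠ ⊤ → A ≠ B →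
        A ⊔ B = ⊤) ↔
      (∀ S : LieSubalgebra F L, S ≠ ⊥ → S ≠ ⊤ → finrank F S = 1) := by
  constructor
  · intro h S hS0 hST
    -- pick a nonzero element of S
    have hSsub : (S : Submodule F L) ≠ ⊥ := by
      intro hc
      exact hS0 (LieSubalgebra.toSubmodule_injective
        (by rw [hc, LieSubalgebra.bot_toSubmodule]))
    obtain ⟨x, hxS, hx0⟩ := Submodule.exists_mem_ne_zero_of_ne_bot hSsub
    set ℓ : LieSubalgebra F L := lineSubalg F L x with hℓ
    have hℓle : ℓ ≤ S := by
      intro y hy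
      have : y ∈ Submodule.span F {x} := hy
      exact Submodule.span_le.mpr (by simpa using hxS) this
    have hℓrank : finrank F ℓ = 1 := finrank_span_singleton hx0
    by_cases hcase : ℓ = S
    · rw [← hcase]; exact hℓrank
    · exfalso
      have hℓ0 : ℓ ≠ ⊥ := by
        intro hc
        apply hx0
        have : x ∈ ℓ := Submodule.mem_span_singleton_self x
        rw [hc] at this
        simpa [LieSubalgebra.mem_bot] using this
      have hℓT : ℓ ≠ ⊤ := by
        intro hc
        exact hST (top_unique (hc ▸ hℓle))
      have := h S ℓ hS0 hST hℓ0 hℓT (fun he => hcase he.symm)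
      rw [sup_of_le_left hℓle] at this
      exact hST this
  · intro h A B hA0 hAT hB0 hBT hAB
    by_contra hsup
    have hAle : A ≤ A ⊔ B := le_sup_left
    have hBle : B ≤ A ⊔ B := le_sup_right
    have hsb0 : A ⊔ B ≠ ⊥ := fun hc => hA0 (le_bot_iff.mp (hc ▸ hAle))
    have hrA : finrank F A = 1 := h A hA0 hAT
    have hrB : finrank F B = 1 := h B hB0 hBT
    have hrS : finrank F (A ⊔ B : LieSubalgebra F L) = 1 := h _ hsb0 hsup
    -- A = A ⊔ B as submodules
    have hAeq : (A : Submodule F L) = ((A ⊔ B : LieSubalgebra F L) : Submodule F L) := by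
      apply Submodule.eq_of_le_of_finrank_le hAle
      show finrank F (A ⊔ B : LieSubalgebra F L) ≤ finrank F A
      rw [hrS, hrA]
    have hBA : B ≤ A := by
      intro y hy
      have : y ∈ ((A ⊔ B : LieSubalgebra F L) : Submodule F L) := hBle hy
      rw [← hAeq] at this
      exact this
    have hAB' : (B : Submodule F L) = (A : Submodule F L) := by
      apply Submodule.eq_of_le_of_finrank_le hBA
      show finrank F A ≤ finrank F B
      rw [hrA, hrB]
    exact hAB (by
      apply LieSubalgebra.toSubmodule_injective
      exact hAB'.symm)
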